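/- Let A = [a_ij] ∈ ℂ^{n×n}, n ≥ 2, be a DD matrix. Then A is not an H-matrix if and only if there exists a nonempty subset M ⊆ T(A) such that the principal submatrix A|_{M²} (which is DD) is not a DD+ matrix, i.e., |a_ii| ≤ Σ_{j∈M, j≠i} |a_ij| for every i ∈ M. -/

import Mathlib

open scoped BigOperators

noncomputable section

/-- Deleted `i`-th row sum of `|A|`, restricted to the index set `S`
    (i.e. `r_i^S(A) = ∑_{j ∈ S \ {i}} |a_{ij}|`). -/
def rowSumOn {ι : Type*} [Fintype ι] [DecidableEq ι]
    (A : Matrix ι ι ℂ) (S : Finset ι) (i : ι) : ℝ :=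
  ∑ j ∈ S.erase i, ‖A i j‖

/-- Deleted `i`-th row sum `r_i(A) = ∑_{j ≠ i} |a_{ij}|`. -/
def rowSum {ι : Type*} [Fintype ι] [DecidableEq ι]
    (A : Matrix ι ι ℂ) (i : ι) : ℝ :=
  rowSumOn A Finset.univ i

/-- `A` is strictly diagonally dominant (SDD). -/
def IsSDD {ι : Type*} [Fintype ι] [DecidableEq ι] (A : Matrix ι ι ℂ) : Prop :=
  ∀ i, rowSum A i < ‖A i i‖

/-- `A` is diagonally dominant (DD). -/
def IsDD {ι : Type*} [Fintype ι] [DecidableEq ι] (A : Matrix ι ι ℂ) : Prop :=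
  ∀ i, rowSum A i ≤ ‖A i i‖

/-- `A` is DD+ : diagonally dominant with at least one strictly dominant row. -/
def IsDDplus {ι : Type*} [Fintype ι] [DecidableEq ι] (A : Matrix ι ι ℂ) : Prop :=
  IsDD A ∧ ∃ i, rowSum A i < ‖A i i‖

/-- `A` is an H-matrix: there is a diagonal matrix `D` with positive diagonal
    entries such that `A * D` is SDD. -/
def IsHMatrix {ι : Type*} [Fintype ι] [DecidableEq ι] (A : Matrix ι ι ℂ) : Prop :=
  ∃ d : ι → ℝ, (∀ i, 0 < d i) ∧ IsSDD (A * Matrix.diagonal fun i => (d i : ℂ))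

/-- `T(A)`: the set of indices of non-SDD rows of `A`. -/
def TSet {ι : Type*} [Fintype ι] [DecidableEq ι] (A : Matrix ι ι ℂ) : Finset ι :=
  Finset.univ.filter fun i => ‖A i i‖ ≤ rowSum A i

/-- The principal submatrix `A|_{M²}` of `A` corresponding to the index set `M`. -/
def subMat {ι : Type*} [Fintype ι] [DecidableEq ι]
    (A : Matrix ι ι ℂ) (M : Finset ι) : Matrix {i // i ∈ M} {i // i ∈ M} ℂ :=
  Matrix.of fun i j => A i.val j.val

/-- There exists a nonzero elements chain `a_{i₀i₁}, a_{i₁i₂}, …, a_{i_{r-1}i_r}`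
    starting at `i₀` and ending at some `i_r ∉ T(A)`. -/
def HasChainOut {ι : Type*} [Fintype ι] [DecidableEq ι]
    (A : Matrix ι ι ℂ) (i₀ : ι) : Prop :=
  ∃ (r : ℕ) (c : Fin (r + 1) → ι), 0 < r ∧ c 0 = i₀ ∧
    (∀ k : Fin r, A (c k.castSucc) (c k.succ) ≠ 0) ∧ c (Fin.last r) ∉ TSet A

/-- `S` is an interwoven set of indices for `A`: `S` is a proper subset of `N`
    and either `|S| ≤ 1`, or `|S| = s > 1` and there exist distinct
    `p₁,…,p_{s-1} ∈ S` and `q₁,…,q_{s-1}` with `q₁ ∈ N \ S`, `a_{p₁q₁} ≠ 0`, and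
    `q_i ∈ (N \ S) ∪ {p₁,…,p_{i-1}}`, `a_{p_iq_i} ≠ 0` for `i = 2,…,s-1`. -/
def Interwoven {ι : Type*} [Fintype ι] [DecidableEq ι]
    (A : Matrix ι ι ℂ) (S : Finset ι) : Prop :=
  S ⊂ Finset.univ ∧
    (S.card ≤ 1 ∨
      (1 < S.card ∧ ∃ p q : Fin (S.card - 1) → ι,
        Function.Injective p ∧ (∀ i, p i ∈ S) ∧
        ∀ i, A (p i) (q i) ≠ 0 ∧ (q i ∉ S ∨ ∃ j, j < i ∧ q i = p j)))

/-- The comparison matrix `ℳ(A)`. -/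
def CompMat {ι : Type*} [Fintype ι] [DecidableEq ι] (A : Matrix ι ι ℂ) : Matrix ι ι ℝ :=
  Matrix.of fun i j => if i = j then ‖A i i‖ else -‖A i j‖


/-! ### Auxiliary material for the proof -/

section AuxProof

variable {n : ℕ}

lemma mul_diag_abs (A : Matrix (Fin n) (Fin n) ℂ) (d : Fin n → ℝ)
    (hd : ∀ i, 0 ≤ d i) (i j : Fin n) :
    ‖(A * Matrix.diagonal fun k => ((d k : ℝ) : ℂ)) i j‖
      = ‖A i j‖ * d j := by
  rw [Matrix.mul_diagonal, norm_mul, Complex.norm_real, Real.norm_eq_abs, abs_of_nonneg (hd j)]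

lemma rowSum_mul_diag (A : Matrix (Fin n) (Fin n) ℂ) (d : Fin n → ℝ)
    (hd : ∀ i, 0 ≤ d i) (i : Fin n) :
    rowSum (A * Matrix.diagonal fun k => ((d k : ℝ) : ℂ)) i
      = ∑ j ∈ Finset.univ.erase i, ‖A i j‖ * d j := by
  unfold rowSum rowSumOn
  exact Finset.sum_congr rfl fun j _ => mul_diag_abs A d hd i j

lemma rowSum_nonneg (A : Matrix (Fin n) (Fin n) ℂ) (i : Fin n) :
    0 ≤ rowSum A i := by
  unfold rowSum rowSumOn
  exact Finset.sum_nonneg fun j _ => norm_nonneg _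

open Classical in
/-- The reachability sets. -/
def Sset (A : Matrix (Fin n) (Fin n) ℂ) : ℕ → Finset (Fin n)
  | 0 => (TSet A)ᶜ
  | (k+1) => Sset A k ∪ Finset.univ.filter
      (fun i => ∃ j ∈ Sset A k, j ≠ i ∧ A i j ≠ 0)

lemma Sset_mono (A : Matrix (Fin n) (Fin n) ℂ) : Monotone (Sset A) :=
  monotone_nat_of_le_succ fun _ => by
    rw [Sset]; exact Finset.subset_union_left

end AuxProof

/-- Corollary. A DD matrix `A ∈ ℂⁿˣⁿ`, `n ≥ 2`, is not an
H-matrix iff there is a nonempty `M ⊆ T(A)` such that the (DD) principal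
submatrix `A|_{M²}` is not DD+, i.e. `|a_ii| ≤ ∑_{j ∈ M, j ≠ i} |a_ij|` for
every `i ∈ M`. -/
theorem not_hmatrix_iff (n : ℕ) (hn : 2 ≤ n)
    (A : Matrix (Fin n) (Fin n) ℂ) (hDD : IsDD A) :
    ¬ IsHMatrix A ↔
      ∃ M : Finset (Fin n), M ⊆ TSet A ∧ M.Nonempty ∧
        ∀ i ∈ M, ‖A i i‖ ≤ rowSumOn A M i := by
  constructor
  · -- hard direction (contrapositive: no bad M ⇒ H-matrix)
    intro hnotH
    by_contra hM
    push_neg at hM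
    apply hnotH
    -- hM : ∀ M ⊆ TSet A, M.Nonempty → ∃ i ∈ M, rowSumOn A M i < |A i i|
    have hTr : ∀ i ∈ TSet A, ‖A i i‖ = rowSum A i := by
      intro i hi
      have h1 : ‖A i i‖ ≤ rowSum A i := by
        simpa [TSet] using hi
      exact le_antisymm h1 (hDD i)
    -- stabilization forces Sset = univ
    have hstab : ∀ k, Sset A (k+1) = Sset A k → Sset A k = Finset.univ := by
      intro k hk
      by_contra hne
      have hMne : ((Sset A k)ᶜ).Nonempty := by
        obtain ⟨i, hi⟩ : ∃ i, i ∉ Sset A k := by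
          by_contra h
          push_neg at h
          exact hne (Finset.eq_univ_iff_forall.mpr h)
        exact ⟨i, Finset.mem_compl.mpr hi⟩
      have hsubT : (Sset A k)ᶜ ⊆ TSet A := by
        intro i hi
        rw [Finset.mem_compl] at hi
        by_contra hiT
        refine hi (Sset_mono A (Nat.zero_le k) ?_)
        rw [Sset]
        simpa using hiT
      obtain ⟨i, hiM, hlt⟩ := hM _ hsubT hMne
      have heq : ‖A i i‖ = rowSum A i := hTr i (hsubT hiM)
      rw [heq] at hlt
      have hsub : ((Sset A k)ᶜ).erase i ⊆ Finset.univ.erase i :=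
        Finset.erase_subset_erase _ (Finset.subset_univ _)
      have hex : ∃ j ∈ Finset.univ.erase i, j ∉ ((Sset A k)ᶜ).erase i ∧ A i j ≠ 0 := by
        by_contra hno
        push_neg at hno
        have : rowSumOn A ((Sset A k)ᶜ) i = rowSum A i := by
          unfold rowSum rowSumOn
          refine Finset.sum_subset hsub fun j hj hjs => ?_
          rw [hno j hj hjs]
          exact norm_zero
        rw [this] at hlt
        exact lt_irrefl _ hlt
      obtain ⟨j, hj, hjM, hjA⟩ := hex
      have hji : j ≠ i := (Finset.mem_erase.mp hj).1
      have hjS : j ∈ Sset A k := by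
        by_contra hjS
        exact hjM (Finset.mem_erase.mpr ⟨hji, Finset.mem_compl.mpr hjS⟩)
      have hiS : i ∈ Sset A (k+1) := by
        rw [Sset]
        classical
        exact Finset.mem_union_right _
          (Finset.mem_filter.mpr ⟨Finset.mem_univ i, j, hjS, hji, hjA⟩)
      rw [hk] at hiS
      exact (Finset.mem_compl.mp hiM) hiS
    have hcard : ∀ k, Sset A k = Finset.univ ∨ k ≤ (Sset A k).card := by
      intro k
      induction k with
      | zero => exact Or.inr (Nat.zero_le _)
      | succ k ih =>
        rcases ih with h | h
        · left
          have hsub := Sset_mono A (Nat.le_succ k)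
          rw [h] at hsub
          exact Finset.univ_subset_iff.mp hsub
        · by_cases he : Sset A (k+1) = Sset A k
          · left
            rw [he]
            exact hstab k he
          · right
            have hss : Sset A k ⊂ Sset A (k+1) :=
              (Sset_mono A (Nat.le_succ k)).ssubset_of_ne (Ne.symm he)
            have := Finset.card_lt_card hss
            omega
    have huniv : Sset A n = Finset.univ := by
      rcases hcard n with h | h
      · exact h
      · have h2 : (Sset A n).card ≤ n := by
          simpa using Finset.card_le_univ (Sset A n)
        exact Finset.eq_univ_of_card _ (by simp [le_antisymm h2 h])
    have hexlvl : ∀ i : Fin n, ∃ k, i ∈ Sset A k :=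
      fun i => ⟨n, huniv ▸ Finset.mem_univ i⟩
    set lvl : Fin n → ℕ := fun i => Nat.find (hexlvl i) with hlvl_def
    have hlvl_mem : ∀ i, i ∈ Sset A (lvl i) := fun i => Nat.find_spec (hexlvl i)
    have hlvl_min : ∀ i k, k < lvl i → i ∉ Sset A k := fun i k hk =>
      Nat.find_min (hexlvl i) hk
    have hlvl_le : ∀ i k, i ∈ Sset A k → lvl i ≤ k := fun i k hk =>
      Nat.find_min' (hexlvl i) hk
    have hlvl0 : ∀ i, lvl i = 0 → i ∉ TSet A := by
      intro i h
      have := hlvl_mem i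
      rw [h, Sset] at this
      simpa using this
    have hlvlS : ∀ i k, lvl i = k + 1 →
        i ∈ TSet A ∧ ∃ j, j ≠ i ∧ A i j ≠ 0 ∧ lvl j ≤ k := by
      intro i k h
      have h1 : i ∈ Sset A (k+1) := h ▸ hlvl_mem i
      have h2 : i ∉ Sset A k := hlvl_min i k (by omega)
      constructor
      · have h0 : i ∉ Sset A 0 := hlvl_min i 0 (by omega)
        rw [Sset] at h0
        simpa using h0
      · rw [Sset] at h1
        rcases Finset.mem_union.mp h1 with h | h
        · exact absurd h h2
        · classical
          obtain ⟨j, hj, hji, hAij⟩ := (Finset.mem_filter.mp h).2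
          exact ⟨j, hji, hAij, hlvl_le j k hj⟩
    -- choose the scaling parameter ρ
    obtain ⟨ρ, hρpos, hρlt1, hρa, hρb⟩ :
        ∃ ρ : ℝ, 0 < ρ ∧ ρ < 1 ∧
          (∀ i, i ∉ TSet A → rowSum A i < (1 - ρ) * ‖A i i‖) ∧
          (∀ i j : Fin n, j ≠ i → A i j ≠ 0 →
            ρ * rowSum A i < ‖A i j‖) := by
      classical
      have hTnot : ∀ i, i ∉ TSet A → rowSum A i < ‖A i i‖ := by
        intro i hi
        by_contra hc
        push_neg at hc
        exact hi (by simpa [TSet] using hc)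
      have hzero : ∀ i, i ∉ TSet A → 0 < ‖A i i‖ := fun i hi =>
        lt_of_le_of_lt (rowSum_nonneg A i) (hTnot i hi)
      have hne1 : (Finset.univ : Finset (Fin n)).Nonempty :=
        ⟨⟨0, by omega⟩, Finset.mem_univ _⟩
      have hne2 : (Finset.univ : Finset (Fin n × Fin n)).Nonempty :=
        ⟨(⟨0, by omega⟩, ⟨0, by omega⟩), Finset.mem_univ _⟩
      let f : Fin n → ℝ := fun i =>
        if i ∈ TSet A then 1
        else (‖A i i‖ - rowSum A i) / (2 * ‖A i i‖)
      let g : Fin n × Fin n → ℝ := fun p =>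
        if A p.1 p.2 ≠ 0 ∧ p.2 ≠ p.1 then
          ‖A p.1 p.2‖ / (rowSum A p.1 + 1)
        else 1
      have hfpos : ∀ i, 0 < f i := by
        intro i
        by_cases hiT : i ∈ TSet A
        · simp [f, hiT]
        · have h1 := hTnot i hiT
          have h2 := hzero i hiT
          simp only [f, hiT, if_false]
          exact div_pos (by linarith) (by linarith)
      have hgpos : ∀ p, 0 < g p := by
        intro p
        by_cases hc : A p.1 p.2 ≠ 0 ∧ p.2 ≠ p.1
        · have h2 := rowSum_nonneg A p.1
          simp only [g, if_pos hc]
          exact div_pos (norm_pos_iff.mpr hc.1) (by linarith)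
        · simp [g, hc]
      set ρ := min (1/2 : ℝ)
        (min (Finset.univ.inf' hne1 f) (Finset.univ.inf' hne2 g)) with hρ_def
      have hρf : ∀ i, ρ ≤ f i := fun i =>
        le_trans (min_le_right _ _)
          (le_trans (min_le_left _ _) (Finset.inf'_le f (Finset.mem_univ i)))
      have hρg : ∀ p, ρ ≤ g p := fun p =>
        le_trans (min_le_right _ _)
          (le_trans (min_le_right _ _) (Finset.inf'_le g (Finset.mem_univ p)))
      have hρpos : 0 < ρ := by
        rw [hρ_def, lt_min_iff, lt_min_iff]
        exact ⟨by norm_num, (Finset.lt_inf'_iff _).mpr fun i _ => hfpos i,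
          (Finset.lt_inf'_iff _).mpr fun p _ => hgpos p⟩
      have hρhalf : ρ ≤ 1/2 := by rw [hρ_def]; exact min_le_left _ _
      refine ⟨ρ, hρpos, by linarith, ?_, ?_⟩
      · intro i hiT
        have h1 : ρ ≤ (if i ∈ TSet A then (1:ℝ)
            else (‖A i i‖ - rowSum A i) / (2 * ‖A i i‖)) :=
          hρf i
        rw [if_neg hiT] at h1
        have h2 := hzero i hiT
        rw [le_div_iff₀ (by linarith)] at h1
        nlinarith [hρpos]
      · intro i j hji hAij
        have h1 : ρ ≤ (if A i j ≠ 0 ∧ j ≠ i then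
            ‖A i j‖ / (rowSum A i + 1) else 1) := hρg (i, j)
        rw [if_pos ⟨hAij, hji⟩] at h1
        have h2 := rowSum_nonneg A i
        rw [le_div_iff₀ (by linarith)] at h1
        nlinarith [hρpos]
    -- the scaling vector
    refine ⟨fun i => 1 - ρ ^ (lvl i + 1), fun i => ?_, fun i => ?_⟩
    · have : ρ ^ (lvl i + 1) < 1 := pow_lt_one₀ hρpos.le hρlt1 (by omega)
      simpa using by linarith
    · have hd0 : ∀ j, (0:ℝ) < 1 - ρ ^ (lvl j + 1) := by
        intro j
        have : ρ ^ (lvl j + 1) < 1 := pow_lt_one₀ hρpos.le hρlt1 (by omega)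
        linarith
      have hd1 : ∀ j, (1:ℝ) - ρ ^ (lvl j + 1) ≤ 1 := by
        intro j
        have := pow_pos hρpos (lvl j + 1)
        linarith
      rw [rowSum_mul_diag A _ (fun j => (hd0 j).le) i,
        mul_diag_abs A _ (fun j => (hd0 j).le) i i]
      cases h : lvl i with
      | zero =>
        have hiT := hlvl0 i h
        have key := hρa i hiT
        have hle : ∑ j ∈ Finset.univ.erase i,
            ‖A i j‖ * (1 - ρ ^ (lvl j + 1)) ≤ rowSum A i := by
          unfold rowSum rowSumOn
          exact Finset.sum_le_sum fun j _ =>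
            mul_le_of_le_one_right (norm_nonneg _) (hd1 j)
        have : (1 - ρ) * ‖A i i‖
            = ‖A i i‖ * (1 - ρ ^ (0 + 1)) := by ring
        rw [this] at key
        exact lt_of_le_of_lt hle key
      | succ k =>
        obtain ⟨hiT, j₀, hj₀i, hj₀A, hj₀lvl⟩ := hlvlS i (k) h
        have heq : ‖A i i‖ = rowSum A i := hTr i hiT
        have hsplit : ∑ j ∈ Finset.univ.erase i,
            ‖A i j‖ * (1 - ρ ^ (lvl j + 1))
            = rowSum A i
              - ∑ j ∈ Finset.univ.erase i, ‖A i j‖ * ρ ^ (lvl j + 1) := by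
          unfold rowSum rowSumOn
          rw [← Finset.sum_sub_distrib]
          exact Finset.sum_congr rfl fun j _ => by ring
        have hterm : ‖A i j₀‖ * ρ ^ (lvl j₀ + 1)
            ≤ ∑ j ∈ Finset.univ.erase i, ‖A i j‖ * ρ ^ (lvl j + 1) :=
          Finset.single_le_sum
            (f := fun j => ‖A i j‖ * ρ ^ (lvl j + 1))
            (fun j _ => mul_nonneg (norm_nonneg _)
              (pow_pos hρpos _).le)
            (Finset.mem_erase.mpr ⟨hj₀i, Finset.mem_univ _⟩)
        have hmono : ρ ^ (k + 1) ≤ ρ ^ (lvl j₀ + 1) :=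
          pow_le_pow_of_le_one hρpos.le hρlt1.le (by omega)
        have hkey := hρb i j₀ hj₀i hj₀A
        have h1 : rowSum A i * ρ ^ (k + 1 + 1)
            < ‖A i j₀‖ * ρ ^ (lvl j₀ + 1) := by
          have hp : (0:ℝ) < ρ ^ (k + 1) := pow_pos hρpos _
          have e1 : rowSum A i * ρ ^ (k + 1 + 1)
              = (ρ * rowSum A i) * ρ ^ (k + 1) := by ring
          rw [e1]
          calc (ρ * rowSum A i) * ρ ^ (k + 1)
              < ‖A i j₀‖ * ρ ^ (k + 1) :=
                mul_lt_mul_of_pos_right hkey hp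
            _ ≤ ‖A i j₀‖ * ρ ^ (lvl j₀ + 1) :=
                mul_le_mul_of_nonneg_left hmono (norm_nonneg _)
        rw [hsplit, heq]
        have hexp : rowSum A i * (1 - ρ ^ (k + 1 + 1))
            = rowSum A i - rowSum A i * ρ ^ (k + 1 + 1) := by ring
        rw [hexp]
        linarith
  · -- easy direction
    rintro ⟨M, hMT, hMne, hMdom⟩ ⟨d, hd, hSDD⟩
    obtain ⟨i, hiM, hmin⟩ := Finset.exists_min_image M d hMne
    have h1 := hSDD i
    rw [rowSum_mul_diag A d (fun j => (hd j).le) i] at h1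
    rw [mul_diag_abs A d (fun j => (hd j).le) i i] at h1
    have h3 : ∑ j ∈ M.erase i, ‖A i j‖ * d j
        ≤ ∑ j ∈ Finset.univ.erase i, ‖A i j‖ * d j :=
      Finset.sum_le_sum_of_subset_of_nonneg
        (Finset.erase_subset_erase _ (Finset.subset_univ M))
        (fun j _ _ => mul_nonneg (norm_nonneg _) (hd j).le)
    have h4 : rowSumOn A M i * d i ≤ ∑ j ∈ M.erase i, ‖A i j‖ * d j := by
      unfold rowSumOn
      rw [Finset.sum_mul]
      exact Finset.sum_le_sum fun j hj =>
        mul_le_mul_of_nonneg_left (hmin j (Finset.mem_of_mem_erase hj))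
          (norm_nonneg _)
    have h5 : ‖A i i‖ ≤ rowSumOn A M i := hMdom i hiM
    have h6 : ‖A i i‖ * d i ≤ rowSumOn A M i * d i :=
      mul_le_mul_of_nonneg_right h5 (hd i).le
    linarith

end
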